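/- With b = b(ℰ) = ⌈1/(ℰ log(1/ℰ))⌉ and fixed η ∈ (0,1), the quantity b·g((1-η)ℰ/b) → 0 as ℰ → 0+, where g(x) = (x+1)log(x+1) - x log x, g(0) := 0. -/

import Mathlib

open Real Filter

noncomputable def g (x : ℝ) : ℝ := (x + 1) * Real.log (x + 1) - x * Real.log x

noncomputable def bfun (E : ℝ) : ℝ := ((⌈1 / (E * Real.log (1 / E))⌉₊ : ℕ) : ℝ)

lemma eve_key (c E : ℝ) (hc0 : 0 < c) (hc1 : c < 1) (hE0 : 0 < E)
    (hE : E < Real.exp (-1)) :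
    0 ≤ bfun E * g (c * E / bfun E) ∧
    bfun E * g (c * E / bfun E) ≤
      (2 * c + c * (Real.log 2 - Real.log c)) * E + 2 * c * (-(Real.log E * E)) := by
  have hE1 : E < 1 := lt_trans hE (by
    rw [Real.exp_lt_one_iff]; norm_num)
  have hlogE : Real.log E < -1 := by
    have := Real.log_lt_log hE0 hE
    rwa [Real.log_exp] at this
  set L := Real.log (1 / E) with hLdef
  have hL : L = -Real.log E := by rw [hLdef, one_div, Real.log_inv]
  have hL1 : 1 < L := by rw [hL]; linarith
  have hEL : E * L ≤ 1 := by
    have h1 : L ≤ 1 / E - 1 := by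
      rw [hLdef]; exact Real.log_le_sub_one_of_pos (by positivity)
    have h2 : E * L ≤ E * (1 / E - 1) := mul_le_mul_of_nonneg_left h1 hE0.le
    have h3 : E * (1 / E - 1) = 1 - E := by field_simp
    linarith [h2, h3 ▸ h2]
  have hEL0 : 0 < E * L := mul_pos hE0 (by linarith)
  set b := bfun E with hbdef
  have hb_ge : 1 / (E * L) ≤ b := Nat.le_ceil _
  have hone : (1 : ℝ) ≤ 1 / (E * L) := by
    rw [le_div_iff₀ hEL0]; linarith
  have hb1 : (1 : ℝ) ≤ b := le_trans hone hb_ge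
  have hb0 : 0 < b := lt_of_lt_of_le one_pos hb1
  have hb_le : b ≤ 2 / (E * L) := by
    have h1 : b < 1 / (E * L) + 1 := Nat.ceil_lt_add_one (by positivity)
    have : 1 / (E * L) + 1 ≤ 2 / (E * L) := by
      have : 2 / (E * L) = 1 / (E * L) + 1 / (E * L) := by ring
      linarith [this ▸ le_refl (2 / (E * L))]
    linarith
  set x := c * E / b with hxdef
  have hx0 : 0 < x := by positivity
  have hbx : b * x = c * E := by
    rw [hxdef]; field_simp
  have hx_le : x ≤ c * E := div_le_self (by positivity) hb1
  have hcE1 : c * E < 1 := by nlinarith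
  have hx1 : x < 1 := lt_of_le_of_lt hx_le hcE1
  -- lower bound
  have hg0 : 0 ≤ g x := by
    have h1 : 0 ≤ (x + 1) * Real.log (x + 1) :=
      mul_nonneg (by linarith) (Real.log_nonneg (by linarith))
    have h2 : x * Real.log x ≤ 0 :=
      mul_nonpos_of_nonneg_of_nonpos hx0.le (Real.log_neg hx0 hx1).le
    unfold g; linarith
  refine ⟨mul_nonneg hb0.le hg0, ?_⟩
  -- upper bound on g x
  have hgx : g x ≤ 2 * x - x * Real.log x := by
    have h1 : Real.log (x + 1) ≤ x := by
      have := Real.log_le_sub_one_of_pos (show (0:ℝ) < x + 1 by linarith)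
      linarith
    have h2 : (x + 1) * Real.log (x + 1) ≤ (x + 1) * x :=
      mul_le_mul_of_nonneg_left h1 (by linarith)
    have h3 : (x + 1) * x ≤ 2 * x := by nlinarith
    unfold g; linarith
  have hbg : b * g x ≤ 2 * (c * E) + (c * E) * (-Real.log x) := by
    have := mul_le_mul_of_nonneg_left hgx hb0.le
    calc b * g x ≤ b * (2 * x - x * Real.log x) := this
      _ = 2 * (b * x) + (b * x) * (-Real.log x) := by ring
      _ = 2 * (c * E) + (c * E) * (-Real.log x) := by rw [hbx]
  -- bound -log x
  have hlogb : Real.log b ≤ Real.log 2 - Real.log E := by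
    have h1 : Real.log b ≤ Real.log (2 / (E * L)) :=
      Real.log_le_log hb0 hb_le
    have h2 : Real.log (2 / (E * L)) = Real.log 2 - (Real.log E + Real.log L) := by
      rw [Real.log_div (by norm_num) (ne_of_gt hEL0), Real.log_mul (ne_of_gt hE0) (by linarith)]
    have h3 : 0 ≤ Real.log L := Real.log_nonneg hL1.le
    linarith
  have hlogx : -Real.log x ≤ Real.log 2 - Real.log c - 2 * Real.log E := by
    have h1 : Real.log x = Real.log c + Real.log E - Real.log b := by
      rw [hxdef, Real.log_div (by positivity) (ne_of_gt hb0),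
        Real.log_mul (ne_of_gt hc0) (ne_of_gt hE0)]
    linarith
  have hfin : (c * E) * (-Real.log x) ≤
      (c * E) * (Real.log 2 - Real.log c - 2 * Real.log E) :=
    mul_le_mul_of_nonneg_left hlogx (by positivity)
  calc b * g x ≤ 2 * (c * E) + (c * E) * (-Real.log x) := hbg
    _ ≤ 2 * (c * E) + (c * E) * (Real.log 2 - Real.log c - 2 * Real.log E) := by linarith
    _ = (2 * c + c * (Real.log 2 - Real.log c)) * E + 2 * c * (-(Real.log E * E)) := by ring

theorem eve_entropy_vanishes (η : ℝ) (hη : η ∈ Set.Ioo (0 : ℝ) 1) :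
    Tendsto (fun E : ℝ => bfun E * g ((1 - η) * E / bfun E))
      (nhdsWithin 0 (Set.Ioi 0)) (nhds 0) := by
  obtain ⟨hη0, hη1⟩ := hη
  set c : ℝ := 1 - η with hc
  have hc0 : 0 < c := by simp only [hc]; linarith
  have hc1 : c < 1 := by simp only [hc]; linarith
  have hbound : Tendsto (fun E : ℝ => (2 * c + c * (Real.log 2 - Real.log c)) * E
      + 2 * c * (-(Real.log E * E))) (nhdsWithin 0 (Set.Ioi 0)) (nhds 0) := by
    have h1 : Tendsto (fun E : ℝ => (2 * c + c * (Real.log 2 - Real.log c)) * E)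
        (nhdsWithin 0 (Set.Ioi 0)) (nhds 0) := by
      have : Tendsto (fun E : ℝ => (2 * c + c * (Real.log 2 - Real.log c)) * E)
          (nhds 0) (nhds 0) := by
        have : Continuous
          fun E : ℝ => (2 * c + c * (Real.log 2 - Real.log c)) * E := continuous_const.mul continuous_id
        simpa using this.tendsto 0
      exact this.mono_left nhdsWithin_le_nhds
    have h2 : Tendsto (fun E : ℝ => Real.log E * E) (nhdsWithin 0 (Set.Ioi 0)) (nhds 0) := by
      have := tendsto_log_mul_rpow_nhdsGT_zero (show (0:ℝ) < 1 by norm_num)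
      refine this.congr' ?_
      filter_upwards [self_mem_nhdsWithin] with E hE
      rw [Real.rpow_one]
    have h3 : Tendsto (fun E : ℝ => 2 * c * (-(Real.log E * E)))
        (nhdsWithin 0 (Set.Ioi 0)) (nhds 0) := by
      have := (h2.neg.const_mul (2 * c))
      simpa using this
    simpa using h1.add h3
  apply squeeze_zero'
  · filter_upwards [Ioo_mem_nhdsGT
      (Real.exp_pos (-1))] with E hE
    exact (eve_key c E hc0 hc1 hE.1 hE.2).1
  · filter_upwards [Ioo_mem_nhdsGT
      (Real.exp_pos (-1))] with E hE
    exact (eve_key c E hc0 hc1 hE.1 hE.2).2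
  · exact hbound
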